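/- Let (d^k)_{k≥0}, (v^k)_{k≥0} be sequences in ℝⁿ and (β_k)_{k≥1}, (t_k)_{k≥0} sequences of real numbers with t_k ≥ 0, such that d⁰ = v⁰, d^k = v^k + β_k d^{k−1} for all k ≥ 1, and d^k ≠ 0 for all k. Set s^k := t_k d^k. Suppose: (a) there exist constants 0 < γ ≤ γ̄ with γ ≤ ‖v^k‖ ≤ γ̄ for all k ≥ 0; (b) Σ_{k≥0} ‖v^k‖⁴/‖d^k‖² < +∞; and (c) there exist constants b > 1 and λ > 0 such that |β_k| ≤ b for all k, and ‖s^{k−1}‖ ≤ λ implies |β_k| ≤ 1/(2b). Then for every natural number Δ ≥ 1 and every index k₀ there exists k ≥ k₀ such that the number of indices i with k ≤ i ≤ k + Δ − 1 and ‖s^{i−1}‖ > λ is strictly greater than Δ/2. -/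

import Mathlib

set_option maxHeartbeats 1000000 in
/-- The paper's Lemma 4.2 in abstract sequence form: under the conjugate-direction
recurrence, the bounds `γ ≤ ‖vᵏ‖ ≤ γ̄`, the Zoutendijk-type condition
`Σ ‖vᵏ‖⁴/‖dᵏ‖² < ∞`, and Property (*), every tail contains a window
`[k, k+Δ−1]` in which strictly more than `Δ/2` steps `sⁱ⁻¹ = t_{i−1} dⁱ⁻¹`
satisfy `‖sⁱ⁻¹‖ > λ`. -/
theorem many_large_steps_of_property_star {n : ℕ}
    (d v : ℕ → EuclideanSpace ℝ (Fin n)) (β t : ℕ → ℝ)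
    (ht : ∀ k, 0 ≤ t k)
    (hd0 : d 0 = v 0)
    (hrec : ∀ k : ℕ, d (k + 1) = v (k + 1) + β (k + 1) • d k)
    (hdne : ∀ k : ℕ, d k ≠ 0)
    (γ γbar : ℝ) (hγ : 0 < γ) (hγγ : γ ≤ γbar)
    (hvlow : ∀ k : ℕ, γ ≤ ‖v k‖) (hvhigh : ∀ k : ℕ, ‖v k‖ ≤ γbar)
    (hsum : Summable fun k : ℕ => ‖v k‖ ^ 4 / ‖d k‖ ^ 2)
    (b lam : ℝ) (hb : 1 < b) (hlam : 0 < lam)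
    (hβb : ∀ k : ℕ, |β (k + 1)| ≤ b)
    (hprop : ∀ k : ℕ, ‖t k • d k‖ ≤ lam → |β (k + 1)| ≤ 1 / (2 * b)) :
    ∀ Δ : ℕ, 1 ≤ Δ → ∀ k₀ : ℕ, ∃ k ≥ k₀,
      (Δ : ℝ) / 2 <
        (((Finset.Icc k (k + Δ - 1)).filter
            fun i => lam < ‖t (i - 1) • d (i - 1)‖).card : ℝ) := by
  intro Δ hΔ k₀
  by_contra hcon
  push_neg at hcon
  set K := max k₀ 1 with hK
  have hK1 : 1 ≤ K := le_max_right _ _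
  have hcount : ∀ k, K ≤ k → (((Finset.Icc k (k + Δ - 1)).filter
      fun i => lam < ‖t (i - 1) • d (i - 1)‖).card : ℝ) ≤ (Δ : ℝ) / 2 :=
    fun k hk => hcon k (le_trans (le_max_left _ _) hk)
  have hb0 : (0:ℝ) < b := lt_trans one_pos hb
  set B : ℕ → ℝ := fun i => 2 * (β i) ^ 2 with hB
  have hBnonneg : ∀ i, 0 ≤ B i := fun i => by positivity
  have h2b : (1:ℝ) ≤ 2 * b ^ 2 := by nlinarith
  have hBle : ∀ i, 1 ≤ i → B i ≤ 2 * b ^ 2 := by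
    intro i hi
    match i, hi with
    | (j+1), _ =>
      have h := hβb j
      have h2 := abs_nonneg (β (j+1))
      have h3 := sq_abs (β (j+1))
      simp only [hB]
      nlinarith
  set M : ℝ := (2 * b ^ 2) ^ Δ with hM
  have hM1 : (1:ℝ) ≤ M := one_le_pow₀ h2b
  -- window product bound
  have hwindow : ∀ k, K ≤ k → ∏ i ∈ Finset.Ioc k (k + Δ), B i ≤ 1 := by
    intro k hk
    set S := Finset.Ioc k (k + Δ) with hS
    have hIcc : Finset.Icc (k+1) (k+1 + Δ - 1) = S := by
      rw [hS, ← Finset.Icc_add_one_left_eq_Ioc]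
      congr 1
      omega
    have hcard : S.card = Δ := by rw [hS, Nat.card_Ioc]; omega
    have hcnt := hcount (k+1) (by omega)
    rw [hIcc] at hcnt
    set P : ℕ → Prop := fun i => lam < ‖t (i - 1) • d (i - 1)‖ with hP
    have hsplit := Finset.prod_filter_mul_prod_filter_not S P B
    have hcards := Finset.card_filter_add_card_filter_not (s := S) (p := P)
    set a := (S.filter P).card with ha
    set c' := (S.filter fun i => ¬ P i).card with hc'
    have hac : a ≤ c' := by
      have : (a : ℝ) ≤ (Δ:ℝ)/2 := hcnt
      have h2a : 2 * a ≤ Δ := by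
        have : (2 * a : ℝ) ≤ (Δ : ℝ) := by push_cast; linarith
        exact_mod_cast this
      omega
    have hL : ∏ i ∈ S.filter P, B i ≤ (2 * b ^ 2) ^ a := by
      rw [ha, ← Finset.prod_const]
      refine Finset.prod_le_prod (fun i _ => hBnonneg i) (fun i hi => ?_)
      have hiS := Finset.mem_filter.1 hi
      have := (Finset.mem_Ioc.1 hiS.1).1
      exact hBle i (by omega)
    have hNL : ∏ i ∈ S.filter (fun i => ¬ P i), B i ≤ (1 / (2 * b ^ 2)) ^ c' := by
      rw [hc', ← Finset.prod_const]
      refine Finset.prod_le_prod (fun i _ => hBnonneg i) (fun i hi => ?_)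
      have hiS := Finset.mem_filter.1 hi
      have hik := (Finset.mem_Ioc.1 hiS.1).1
      have hsmall : ‖t (i-1) • d (i-1)‖ ≤ lam := le_of_not_gt hiS.2
      have hβi : |β i| ≤ 1 / (2 * b) := by
        have := hprop (i-1) hsmall
        have hrw : i - 1 + 1 = i := by omega
        rwa [hrw] at this
      have hβi' : |β i| * (2 * b) ≤ 1 := by
        rw [← le_div_iff₀ (by positivity)]
        exact hβi
      have h3 := sq_abs (β i)
      have h4 := abs_nonneg (β i)
      simp only [hB]
      rw [le_div_iff₀ (by positivity : (0:ℝ) < 2 * b ^ 2)]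
      nlinarith [mul_self_nonneg (1 - |β i| * (2 * b)), mul_nonneg h4 (by positivity : (0:ℝ) ≤ 2*b)]
    have hprodS : ∏ i ∈ S, B i ≤ (2 * b ^ 2) ^ a * (1 / (2 * b ^ 2)) ^ c' := by
      rw [← hsplit]
      exact mul_le_mul hL hNL (Finset.prod_nonneg fun i _ => hBnonneg i)
        (le_trans (Finset.prod_nonneg fun i _ => hBnonneg i) hL)
    refine hprodS.trans ?_
    rw [one_div, inv_pow, ← div_eq_mul_inv, div_le_one (by positivity)]
    exact pow_le_pow_right₀ h2b hac
  -- suffix product bound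
  have hsuffix : ∀ N p q, q - p ≤ N → K ≤ p → ∏ i ∈ Finset.Ioc p q, B i ≤ M := by
    intro N
    induction N with
    | zero =>
      intro p q hlen hp
      rw [Finset.Ioc_eq_empty (by omega), Finset.prod_empty]
      exact hM1
    | succ N ih =>
      intro p q hlen hp
      by_cases hcase : q - p ≤ Δ
      · calc ∏ i ∈ Finset.Ioc p q, B i
            ≤ ∏ _i ∈ Finset.Ioc p q, (2 * b ^ 2) :=
              Finset.prod_le_prod (fun i _ => hBnonneg i)
                (fun i hi => hBle i (by have := (Finset.mem_Ioc.1 hi).1; omega))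
          _ = (2 * b ^ 2) ^ (Finset.Ioc p q).card := Finset.prod_const _
          _ ≤ M := by
              rw [hM]
              exact pow_le_pow_right₀ h2b (by rw [Nat.card_Ioc]; omega)
      · have hsplit : (∏ i ∈ Finset.Ioc p (p+Δ), B i) * ∏ i ∈ Finset.Ioc (p+Δ) q, B i
            = ∏ i ∈ Finset.Ioc p q, B i :=
          Finset.prod_Ioc_consecutive _ (by omega) (by omega)
        rw [← hsplit]
        have h1 := hwindow p hp
        have h2 := ih (p+Δ) q (by omega) (by omega)
        calc (∏ i ∈ Finset.Ioc p (p+Δ), B i) * ∏ i ∈ Finset.Ioc (p+Δ) q, B i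
            ≤ 1 * M := mul_le_mul h1 h2
              (Finset.prod_nonneg fun i _ => hBnonneg i) zero_le_one
          _ = M := one_mul M
  -- one-step bound
  set A : ℝ := 2 * γbar ^ 2 with hA
  have hγbar : (0:ℝ) < γbar := lt_of_lt_of_le hγ hγγ
  have hApos : (0:ℝ) < A := by positivity
  have hstep : ∀ k, ‖d (k+1)‖ ^ 2 ≤ A + B (k+1) * ‖d k‖ ^ 2 := by
    intro k
    have h1 : ‖d (k+1)‖ ≤ ‖v (k+1)‖ + |β (k+1)| * ‖d k‖ := by
      rw [hrec k]
      refine (norm_add_le _ _).trans ?_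
      rw [norm_smul, Real.norm_eq_abs]
    have h2 : ‖v (k+1)‖ ≤ γbar := hvhigh _
    have h3 := norm_nonneg (d (k+1))
    have h4 := norm_nonneg (v (k+1))
    have h5 := norm_nonneg (d k)
    have h6 := abs_nonneg (β (k+1))
    have h7 := sq_abs (β (k+1))
    simp only [hB, hA]
    nlinarith [sq_nonneg (‖v (k+1)‖ - |β (k+1)| * ‖d k‖),
      mul_nonneg h6 h5, sq_nonneg (|β (k+1)| * ‖d k‖)]
  -- unrolled bound
  have hunroll : ∀ m, ‖d (K+m)‖ ^ 2 ≤ (∏ i ∈ Finset.Ioc K (K+m), B i) * ‖d K‖ ^ 2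
      + A * ∑ j ∈ Finset.Ioc K (K+m), ∏ i ∈ Finset.Ioc j (K+m), B i := by
    intro m
    induction m with
    | zero => simp
    | succ m ih =>
      have hst := hstep (K+m)
      have heq : K + (m+1) = (K+m) + 1 := rfl
      have hprodsplit : ∏ i ∈ Finset.Ioc K (K+(m+1)), B i
          = (∏ i ∈ Finset.Ioc K (K+m), B i) * B (K+m+1) := by
        rw [heq]
        exact Finset.prod_Ioc_succ_top (by omega) _
      have hsumsplit : ∑ j ∈ Finset.Ioc K (K+(m+1)), ∏ i ∈ Finset.Ioc j (K+(m+1)), B i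
          = (∑ j ∈ Finset.Ioc K (K+m), ∏ i ∈ Finset.Ioc j (K+m), B i) * B (K+m+1) + 1 := by
        rw [heq, Finset.sum_Ioc_succ_top (by omega), Finset.sum_mul]
        congr 1
        · refine Finset.sum_congr rfl (fun j hj => ?_)
          have hj' := Finset.mem_Ioc.1 hj
          exact Finset.prod_Ioc_succ_top (by omega) _
        · simp
      rw [hprodsplit, hsumsplit]
      have hB1 : 0 ≤ B (K+m+1) := hBnonneg _
      have hDK : (0:ℝ) ≤ ‖d K‖ ^ 2 := by positivity
      have hkey := mul_le_mul_of_nonneg_left ih hB1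
      have hgoal : ‖d (K+(m+1))‖ ^ 2 ≤ A + B (K+m+1) * ‖d (K+m)‖ ^ 2 := hst
      linarith [hkey, hgoal]
  -- linear growth bound
  set c : ℝ := M * ‖d K‖ ^ 2 + A * M with hc
  have hMpos : (0:ℝ) < M := lt_of_lt_of_le one_pos hM1
  have hcpos : (0:ℝ) < c := by positivity
  have hDle : ∀ q, K ≤ q → ‖d q‖ ^ 2 ≤ c * ((q:ℝ) + 1) := by
    intro q hq
    obtain ⟨m, rfl⟩ := Nat.exists_eq_add_of_le hq
    have h1 := hunroll m
    have h2 : ∏ i ∈ Finset.Ioc K (K+m), B i ≤ M := hsuffix m K (K+m) (by omega) le_rfl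
    have h3 : ∑ j ∈ Finset.Ioc K (K+m), ∏ i ∈ Finset.Ioc j (K+m), B i ≤ (m:ℝ) * M := by
      calc ∑ j ∈ Finset.Ioc K (K+m), ∏ i ∈ Finset.Ioc j (K+m), B i
          ≤ ∑ _j ∈ Finset.Ioc K (K+m), M :=
            Finset.sum_le_sum (fun j hj => hsuffix m j (K+m)
              (by have := (Finset.mem_Ioc.1 hj).1; omega)
              (by have := (Finset.mem_Ioc.1 hj).1; omega))
        _ = ((Finset.Ioc K (K+m)).card : ℝ) * M := by
            rw [Finset.sum_const, nsmul_eq_mul]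
        _ = (m:ℝ) * M := by rw [Nat.card_Ioc]; norm_num
    have hDK : (0:ℝ) ≤ ‖d K‖ ^ 2 := by positivity
    have h4 : ‖d (K+m)‖ ^ 2 ≤ M * ‖d K‖ ^ 2 + A * ((m:ℝ) * M) := by
      have h5 := mul_le_mul_of_nonneg_right h2 hDK
      have h6 := mul_le_mul_of_nonneg_left h3 hApos.le
      linarith
    refine h4.trans ?_
    have hX : (0:ℝ) ≤ ((K+m:ℕ):ℝ) := Nat.cast_nonneg _
    have hm : (m:ℝ) ≤ ((K+m:ℕ):ℝ) + 1 := by push_cast; linarith [Nat.cast_nonneg (α := ℝ) K]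
    have h1' : (1:ℝ) ≤ ((K+m:ℕ):ℝ) + 1 := by linarith
    have hMDK : (0:ℝ) ≤ M * ‖d K‖ ^ 2 := by positivity
    have hAM : (0:ℝ) ≤ A * M := by positivity
    have ha1 := mul_le_mul_of_nonneg_left h1' hMDK
    have ha2 := mul_le_mul_of_nonneg_left hm hAM
    rw [hc]
    nlinarith
  -- summability of 1/‖d k‖²
  have hDpos : ∀ k, (0:ℝ) < ‖d k‖ ^ 2 := fun k =>
    pow_pos (norm_pos_iff.mpr (hdne k)) 2
  have hsumD : Summable (fun k : ℕ => 1 / ‖d k‖ ^ 2) := by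
    refine Summable.of_nonneg_of_le (fun k => by positivity) (fun k => ?_)
      (hsum.mul_left (1 / γ ^ 4))
    have hv4 : γ ^ 4 ≤ ‖v k‖ ^ 4 := pow_le_pow_left₀ hγ.le (hvlow k) 4
    have h2 : (1:ℝ) ≤ ‖v k‖ ^ 4 / γ ^ 4 := (one_le_div (by positivity)).2 hv4
    calc 1 / ‖d k‖ ^ 2 ≤ (‖v k‖ ^ 4 / γ ^ 4) * (1 / ‖d k‖ ^ 2) :=
          le_mul_of_one_le_left (by positivity) h2
      _ = (1 / γ ^ 4) * (‖v k‖ ^ 4 / ‖d k‖ ^ 2) := by ring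
  -- contradiction with divergence of harmonic series
  set g : ℕ → ℝ := fun k => 1 / (c * ((k:ℝ) + 1)) with hg
  have hgsum : Summable g := by
    have hshift : Summable (fun k : ℕ => g (k + K)) := by
      refine Summable.of_nonneg_of_le (fun k => by positivity) (fun k => ?_)
        ((summable_nat_add_iff K).2 hsumD)
      simp only [hg]
      exact one_div_le_one_div_of_le (hDpos (k+K)) (hDle (k+K) (by omega))
    exact (summable_nat_add_iff K).1 hshift
  have hns : ¬ Summable g := by
    intro hs
    have h1 : Summable (fun k : ℕ => 1 / ((k:ℝ) + 1)) := by
      refine (hs.mul_left c).congr (fun k => ?_)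
      simp only [hg]
      field_simp
    have h2 : Summable (fun k : ℕ => 1 / (((k + 1 : ℕ)):ℝ)) := by
      refine h1.congr (fun k => ?_)
      push_cast
      ring
    exact Real.not_summable_one_div_natCast ((summable_nat_add_iff 1).1 h2)
  exact hns hgsum
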